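/- Let X be a finitely ramified fractal and k ∈ ℕ such that, for every n, every n-cell of X contains at least two disjoint (n+k)-cells and no two disjoint n-cells of X both intersect a common (n+k)-cell. Let α be a real number with 1 < α ≤ (3/2)^{1/k}. Then the metric d_α, defined by d_α(p,q) = inf { Σ_{i=1}^{l} α^{−|E_i|} : E_1,…,E_l is a cell chain connecting p and q }, is an undistorted metric on X. -/

import Mathlib

open Set

/-- A finitely ramified cell structure on a topological space `X`: a locally finite,
level-indexed family of "cells", where each cell is compact, connected, with nonempty
interior, the unique `0`-cell is all of `X`, every `(n+1)`-cell lies in some `n`-cell,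
each `n`-cell is the union of the `(n+1)`-cells it contains, two distinct cells of the
same level meet in a finite set, and every infinite descending chain of cells
intersects in a single point. -/
structure CellStructure (X : Type*) [TopologicalSpace X] where
  cells : ℕ → Set (Set X)
  finite_cells : ∀ n, (cells n).Finite
  isCompact_cells : ∀ n, ∀ E ∈ cells n, IsCompact E
  isConnected_cells : ∀ n, ∀ E ∈ cells n, IsConnected E
  interior_nonempty : ∀ n, ∀ E ∈ cells n, (interior E).Nonempty
  root : cells 0 = {Set.univ}
  exists_parent : ∀ n, ∀ E' ∈ cells (n + 1), ∃ E ∈ cells n, E' ⊆ E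
  eq_sUnion_children : ∀ n, ∀ E ∈ cells n, E = ⋃₀ {E' | E' ∈ cells (n + 1) ∧ E' ⊆ E}
  inter_finite : ∀ n, ∀ E₁ ∈ cells n, ∀ E₂ ∈ cells n, E₁ ≠ E₂ → (E₁ ∩ E₂).Finite
  descending_singleton : ∀ E : ℕ → Set X, (∀ n, E n ∈ cells n) → (∀ n, E (n + 1) ⊆ E n) →
    ∃ p : X, (⋂ n, E n) = {p}

/-- `d` is a metric (distance function) on the set `X`. -/
def IsMetricOn {X : Type*} (d : X → X → ℝ) : Prop :=
  (∀ x y, 0 ≤ d x y) ∧ (∀ x y, d x y = 0 ↔ x = y) ∧ (∀ x y, d x y = d y x) ∧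
    ∀ x y z, d x z ≤ d x y + d y z

/-- The distance function `d` induces the given topology on `X`. -/
def InducesTopology {X : Type*} [TopologicalSpace X] (d : X → X → ℝ) : Prop :=
  ∀ s : Set X, IsOpen s ↔ ∀ x ∈ s, ∃ ε > 0, ∀ y, d x y < ε → y ∈ s

/-- The diameter of a set with respect to a distance function. -/
noncomputable def sdiam {X : Type*} (d : X → X → ℝ) (S : Set X) : ℝ :=
  sSup (Set.image2 d S S)

/-- The distance between two sets with respect to a distance function. -/
noncomputable def sdist {X : Type*} (d : X → X → ℝ) (S T : Set X) : ℝ :=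
  sInf (Set.image2 d S T)

/-- The distance function `d` is `(r,R,C,δ)`-undistorted with respect to the family
of cells `cells`: exponential decay of diameter ratios of intersecting cells, and
cell separation for disjoint cells of the same level. -/
def IsUndistortedWith {X : Type*} (cells : ℕ → Set (Set X)) (d : X → X → ℝ)
    (r R C δ : ℝ) : Prop :=
  0 < r ∧ r ≤ R ∧ R < 1 ∧ 1 ≤ C ∧ 0 < δ ∧
    (∀ m n : ℕ, m ≤ n → ∀ E ∈ cells m, ∀ E' ∈ cells n, (E ∩ E').Nonempty →
      r ^ (n - m) / C ≤ sdiam d E' / sdiam d E ∧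
        sdiam d E' / sdiam d E ≤ C * R ^ (n - m)) ∧
    ∀ n : ℕ, ∀ E₁ ∈ cells n, ∀ E₂ ∈ cells n, Disjoint E₁ E₂ →
      δ * sdiam d E₁ ≤ sdist d E₁ E₂

/-- `d` is undistorted if it is `(r,R,C,δ)`-undistorted for some constants. -/
def IsUndistorted {X : Type*} (cells : ℕ → Set (Set X)) (d : X → X → ℝ) : Prop :=
  ∃ r R C δ : ℝ, IsUndistortedWith cells d r R C δ

/-- `η` is a homeomorphism of `[0,∞)` onto itself (equivalently: a continuous,
strictly increasing surjection of `[0,∞)` onto `[0,∞)` fixing `0`). -/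
def IsQSGauge (η : ℝ → ℝ) : Prop :=
  ContinuousOn η (Set.Ici 0) ∧ StrictMonoOn η (Set.Ici 0) ∧ η 0 = 0 ∧
    Set.MapsTo η (Set.Ici 0) (Set.Ici 0) ∧ Set.SurjOn η (Set.Ici 0) (Set.Ici 0)

/-- The `η`-quasisymmetry inequality for a map `f` between sets carrying
distance functions `dX` and `dY`. -/
def QSIneq {X Y : Type*} (dX : X → X → ℝ) (dY : Y → Y → ℝ) (f : X → Y) (η : ℝ → ℝ) : Prop :=
  ∀ a b c : X, a ≠ b → a ≠ c → b ≠ c →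
    dY (f a) (f b) / dY (f a) (f c) ≤ η (dX a b / dX a c)


/-- The weight `Σ α^{-|E_i|}` of a chain of cells, each recorded with its level. -/
noncomputable def chainWeight {X : Type*} (α : ℝ) (c : List (ℕ × Set X)) : ℝ :=
  (c.map fun e => α ^ (-(e.1 : ℤ))).sum

/-- `c` is a cell chain connecting `p` to `q`: a nonempty finite sequence of cells
(recorded with their levels) with `p` in the first cell, `q` in the last one, and
consecutive cells intersecting. -/
def IsCellChain {X : Type*} [TopologicalSpace X] (CS : CellStructure X) (p q : X)
    (c : List (ℕ × Set X)) : Prop :=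
  c ≠ [] ∧ (∀ e ∈ c, e.2 ∈ CS.cells e.1) ∧
    (∃ e, c.head? = some e ∧ p ∈ e.2) ∧ (∃ e, c.getLast? = some e ∧ q ∈ e.2) ∧
    List.Chain' (fun e f => (e.2 ∩ f.2).Nonempty) c

/-- The distance function `d_α(p,q) = inf { Σ α^{-|E_i|} }` over all cell chains
connecting `p` and `q`. -/
noncomputable def dAlpha {X : Type*} [TopologicalSpace X] (CS : CellStructure X)
    (α : ℝ) (p q : X) : ℝ :=
  sInf {s : ℝ | ∃ c : List (ℕ × Set X), IsCellChain CS p q c ∧ chainWeight α c = s}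

/-- No intersecting pair of `n`-cells contains `p` and `q` respectively. -/
def NoPairAt {X : Type*} [TopologicalSpace X] (CS : CellStructure X) (p q : X)
    (n : ℕ) : Prop :=
  ∀ Ex ∈ CS.cells n, ∀ Ey ∈ CS.cells n, p ∈ Ex → q ∈ Ey → ¬(Ex ∩ Ey).Nonempty

section Stmt7Aux

set_option linter.unusedSectionVars false
set_option linter.unusedVariables false

open List

variable {X : Type*} [TopologicalSpace X] (CS : CellStructure X)

lemma cell_nonempty {n : ℕ} {E : Set X} (hE : E ∈ CS.cells n) : E.Nonempty :=
  (CS.isConnected_cells n E hE).nonempty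

lemma univ_mem_cells : (Set.univ : Set X) ∈ CS.cells 0 := by rw [CS.root]; rfl

lemma exists_cell_mem (x : X) : ∀ n : ℕ, ∃ E ∈ CS.cells n, x ∈ E := by
  intro n
  induction n with
  | zero => exact ⟨Set.univ, univ_mem_cells CS, Set.mem_univ x⟩
  | succ n ih =>
    obtain ⟨E, hE, hx⟩ := ih
    rw [CS.eq_sUnion_children n E hE] at hx
    obtain ⟨E', ⟨hE', -⟩, hx'⟩ := hx
    exact ⟨E', hE', hx'⟩

lemma exists_ancestor : ∀ (n : ℕ) {m : ℕ}, m ≤ n → ∀ {E : Set X}, E ∈ CS.cells n →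
    ∃ A ∈ CS.cells m, E ⊆ A := by
  intro n
  induction n with
  | zero =>
    intro m hm E hE
    rw [Nat.le_zero] at hm; subst hm
    exact ⟨E, hE, subset_rfl⟩
  | succ n ih =>
    intro m hm E hE
    rcases Nat.eq_or_lt_of_le hm with h | h
    · subst h; exact ⟨E, hE, subset_rfl⟩
    · obtain ⟨E', hE', hsub⟩ := CS.exists_parent n E hE
      obtain ⟨A, hA, hsub'⟩ := ih (Nat.lt_succ_iff.mp h) hE'
      exact ⟨A, hA, hsub.trans hsub'⟩

lemma exists_descendant (j : ℕ) : ∀ {n : ℕ} {E : Set X}, E ∈ CS.cells n → ∀ {x : X}, x ∈ E →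
    ∃ D ∈ CS.cells (n + j), x ∈ D ∧ D ⊆ E := by
  induction j with
  | zero => intro n E hE x hx; exact ⟨E, hE, hx, subset_rfl⟩
  | succ j ih =>
    intro n E hE x hx
    obtain ⟨D, hD, hxD, hDE⟩ := ih hE hx
    rw [CS.eq_sUnion_children _ D hD] at hxD
    obtain ⟨D', ⟨hD', hsub⟩, hxD'⟩ := hxD
    exact ⟨D', hD', hxD', hsub.trans hDE⟩

variable {α : ℝ}

lemma chainWeight_nonneg (hα : 0 < α) (c : List (ℕ × Set X)) : 0 ≤ chainWeight α c := by
  apply List.sum_nonneg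
  intro x hx
  obtain ⟨e, -, rfl⟩ := List.mem_map.mp hx
  exact zpow_nonneg hα.le _

lemma le_chainWeight (hα : 0 < α) {c : List (ℕ × Set X)} {e : ℕ × Set X} (he : e ∈ c) :
    α ^ (-(e.1 : ℤ)) ≤ chainWeight α c :=
  List.single_le_sum (fun x hx => by
    obtain ⟨e', -, rfl⟩ := List.mem_map.mp hx; exact zpow_nonneg hα.le _) _
    (List.mem_map_of_mem he)

lemma chainWeight_single (n : ℕ) (E : Set X) : chainWeight α [(n, E)] = α ^ (-(n : ℤ)) := by
  simp [chainWeight]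

lemma chainWeight_split (c : List (ℕ × Set X)) (i : ℕ) :
    chainWeight α (c.take i) + chainWeight α (c.drop i) = chainWeight α c := by
  unfold chainWeight
  rw [List.map_take, List.map_drop, List.sum_take_add_sum_drop]

lemma chainWeight_append (c₁ c₂ : List (ℕ × Set X)) :
    chainWeight α (c₁ ++ c₂) = chainWeight α c₁ + chainWeight α c₂ := by
  unfold chainWeight
  rw [List.map_append, List.sum_append]

lemma chainWeight_reverse (c : List (ℕ × Set X)) :
    chainWeight α c.reverse = chainWeight α c := by
  unfold chainWeight
  rw [List.map_reverse, List.sum_reverse]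

lemma isCellChain_single {n : ℕ} {E : Set X} (hE : E ∈ CS.cells n) {p q : X}
    (hp : p ∈ E) (hq : q ∈ E) : IsCellChain CS p q [(n, E)] :=
  ⟨by simp, by simpa using hE, ⟨(n, E), rfl, hp⟩, ⟨(n, E), rfl, hq⟩, List.isChain_singleton _⟩

lemma isCellChain_reverse {p q : X} {c : List (ℕ × Set X)} (hc : IsCellChain CS p q c) :
    IsCellChain CS q p c.reverse := by
  obtain ⟨hne, hmem, ⟨ep, hhead, hpe⟩, ⟨eq', hlast, hqe⟩, hchain⟩ := hc
  refine ⟨by simpa using hne, fun e he => hmem e (List.mem_reverse.mp he),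
    ⟨eq', by rwa [List.head?_reverse], hqe⟩,
    ⟨ep, by rwa [List.getLast?_reverse], hpe⟩,
    List.isChain_reverse.mpr (hchain.imp fun a b h => ?_)⟩
  obtain ⟨x, hx⟩ := h
  exact ⟨x, hx.2, hx.1⟩

lemma dAlpha_set_nonempty (p q : X) :
    {s : ℝ | ∃ c : List (ℕ × Set X), IsCellChain CS p q c ∧ chainWeight α c = s}.Nonempty :=
  ⟨_, [(0, Set.univ)], isCellChain_single CS (univ_mem_cells CS) trivial trivial, rfl⟩

lemma dAlpha_set_bddBelow (hα : 0 < α) (p q : X) :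
    BddBelow {s : ℝ | ∃ c : List (ℕ × Set X), IsCellChain CS p q c ∧ chainWeight α c = s} := by
  refine ⟨0, ?_⟩
  rintro s ⟨c, -, rfl⟩
  exact chainWeight_nonneg hα c

lemma dAlpha_le_chainWeight (hα : 0 < α) {p q : X} {c : List (ℕ × Set X)}
    (hc : IsCellChain CS p q c) : dAlpha CS α p q ≤ chainWeight α c :=
  csInf_le (dAlpha_set_bddBelow CS hα p q) ⟨c, hc, rfl⟩

lemma dAlpha_ge (hα : 0 < α) {p q : X} {b : ℝ}
    (h : ∀ c : List (ℕ × Set X), IsCellChain CS p q c → b ≤ chainWeight α c) :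
    b ≤ dAlpha CS α p q := by
  apply le_csInf (dAlpha_set_nonempty CS p q)
  rintro s ⟨c, hc, rfl⟩
  exact h c hc

lemma dAlpha_nonneg (hα : 0 < α) (p q : X) : 0 ≤ dAlpha CS α p q :=
  dAlpha_ge CS hα fun c _ => chainWeight_nonneg hα c

lemma dAlpha_le_single (hα : 0 < α) {n : ℕ} {E : Set X} (hE : E ∈ CS.cells n) {p q : X}
    (hp : p ∈ E) (hq : q ∈ E) : dAlpha CS α p q ≤ α ^ (-(n : ℤ)) := by
  have := dAlpha_le_chainWeight CS hα (isCellChain_single CS hE hp hq)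
  rwa [chainWeight_single] at this

lemma dAlpha_le_one (hα : 0 < α) (p q : X) : dAlpha CS α p q ≤ 1 := by
  have := dAlpha_le_single CS hα (univ_mem_cells CS) (Set.mem_univ p) (Set.mem_univ q)
  simpa using this

lemma dAlpha_symm (hα : 0 < α) (p q : X) : dAlpha CS α p q = dAlpha CS α q p := by
  have key : ∀ a b : X, dAlpha CS α a b ≤ dAlpha CS α b a := by
    intro a b
    apply le_csInf (dAlpha_set_nonempty CS b a)
    rintro s ⟨c, hc, rfl⟩
    calc dAlpha CS α a b ≤ chainWeight α c.reverse :=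
          dAlpha_le_chainWeight CS hα (isCellChain_reverse CS hc)
      _ = chainWeight α c := chainWeight_reverse c
  exact le_antisymm (key p q) (key q p)

lemma dAlpha_triangle (hα : 0 < α) (x y z : X) :
    dAlpha CS α x z ≤ dAlpha CS α x y + dAlpha CS α y z := by
  have key : ∀ s : ℝ, (∃ c : List (ℕ × Set X), IsCellChain CS x y c ∧ chainWeight α c = s) →
      ∀ t : ℝ, (∃ c : List (ℕ × Set X), IsCellChain CS y z c ∧ chainWeight α c = t) →
      dAlpha CS α x z ≤ s + t := by
    rintro s ⟨c₁, hc₁, rfl⟩ t ⟨c₂, hc₂, rfl⟩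
    obtain ⟨hne₁, hmem₁, ⟨e₀, hh₀, hx₀⟩, ⟨e₁, hl₁, hy₁⟩, hch₁⟩ := hc₁
    obtain ⟨hne₂, hmem₂, ⟨e₂, hh₂, hy₂⟩, ⟨e₃, hl₃, hz₃⟩, hch₂⟩ := hc₂
    have happ : IsCellChain CS x z (c₁ ++ c₂) := by
      refine ⟨by simp [hne₁], ?_, ?_, ?_, ?_⟩
      · intro e he
        rcases List.mem_append.mp he with h | h
        exacts [hmem₁ e h, hmem₂ e h]
      · exact ⟨e₀, by rw [List.head?_append, hh₀]; rfl, hx₀⟩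
      · exact ⟨e₃, by rw [List.getLast?_append, hl₃]; rfl, hz₃⟩
      · refine hch₁.append hch₂ ?_
        intro a ha b hb
        rw [hl₁, Option.mem_some_iff] at ha
        rw [hh₂, Option.mem_some_iff] at hb
        subst ha; subst hb
        exact ⟨y, hy₁, hy₂⟩
    calc dAlpha CS α x z ≤ chainWeight α (c₁ ++ c₂) := dAlpha_le_chainWeight CS hα happ
      _ = chainWeight α c₁ + chainWeight α c₂ := chainWeight_append c₁ c₂
  rw [← sub_le_iff_le_add']
  apply le_csInf (dAlpha_set_nonempty CS y z)
  intro t ht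
  rw [sub_le_iff_le_add', ← sub_le_iff_le_add]
  apply le_csInf (dAlpha_set_nonempty CS x y)
  intro s hs
  rw [sub_le_iff_le_add]
  exact key s hs t ht

lemma chain_lb (k : ℕ)
    (hk₂ : ∀ n : ℕ, ∀ E₁ ∈ CS.cells n, ∀ E₂ ∈ CS.cells n, Disjoint E₁ E₂ →
      ∀ F ∈ CS.cells (n + k), ¬((E₁ ∩ F).Nonempty ∧ (E₂ ∩ F).Nonempty))
    (hα₁ : 1 < α) (hαk : α ^ k ≤ 3 / 2) :
    ∀ (L : ℕ) (ch : List (ℕ × Set X)), ch.length ≤ L →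
    ∀ (m : ℕ) (G₁ G₂ : Set X), G₁ ∈ CS.cells m → G₂ ∈ CS.cells m → Disjoint G₁ G₂ →
    ∀ (p q : X), p ∈ G₁ → q ∈ G₂ → IsCellChain CS p q ch →
    2 / 3 * α ^ (-(m : ℤ)) ≤ chainWeight α ch := by
  have hα0 : (0:ℝ) < α := lt_trans one_pos hα₁
  classical
  intro L
  induction L with
  | zero =>
    intro ch hlen m G₁ G₂ _ _ _ p q _ _ hc
    exact absurd (List.length_eq_zero_iff.mp (Nat.le_zero.mp hlen)) hc.1
  | succ L ih =>
    intro ch hlen m G₁ G₂ hG₁ hG₂ hdisj p q hp hq hc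
    obtain ⟨hne, hmem, ⟨ep, hhead, hpe⟩, ⟨eq', hlast, hqe⟩, hchain⟩ := hc
    have hkinv : (2/3 : ℝ) ≤ α ^ (-(k : ℤ)) := by
      rw [zpow_neg, zpow_natCast]
      calc (2/3 : ℝ) = (3/2 : ℝ)⁻¹ := by norm_num
        _ ≤ (α ^ k)⁻¹ := inv_anti₀ (pow_pos hα0 k) hαk
    have hmk : ((m + k : ℕ) : ℤ) = (m : ℤ) + (k : ℤ) := by push_cast; ring
    have hkey : (2/3 : ℝ) * α ^ (-(m:ℤ)) ≤ α ^ (-((m + k : ℕ) : ℤ)) := by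
      rw [hmk, neg_add, zpow_add₀ (ne_of_gt hα0), mul_comm]
      exact mul_le_mul_of_nonneg_left hkinv (zpow_nonneg hα0.le _)
    by_cases hcase : ∃ e ∈ ch, e.1 ≤ m + k
    · obtain ⟨e, hec, helev⟩ := hcase
      calc 2/3 * α ^ (-(m:ℤ)) ≤ α ^ (-((m + k : ℕ) : ℤ)) := hkey
        _ ≤ α ^ (-(e.1 : ℤ)) := by
            apply zpow_le_zpow_right₀ hα₁.le
            have : (e.1 : ℤ) ≤ ((m + k : ℕ) : ℤ) := by exact_mod_cast helev
            omega
        _ ≤ chainWeight α ch := le_chainWeight hα0 hec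
    · push_neg at hcase
      have hanc : ∀ e ∈ ch, ∃ A, A ∈ CS.cells (m + k) ∧ e.2 ⊆ A := by
        intro e he
        obtain ⟨A, hA, hsub⟩ := exists_ancestor CS e.1 (le_of_lt (hcase e he)) (hmem e he)
        exact ⟨A, hA, hsub⟩
      choose! A hA₁ hA₂ using hanc
      have hl0 : 0 < ch.length := List.length_pos_iff.mpr hne
      have hheadElem : ch[0]? = some ep := by rwa [← List.head?_eq_getElem?]
      have hlastElem : ch[ch.length - 1]? = some eq' := by rwa [← List.getLast?_eq_getElem?]
      obtain ⟨h0l, hc0⟩ := List.getElem?_eq_some_iff.mp hheadElem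
      obtain ⟨hl1l, hcl1⟩ := List.getElem?_eq_some_iff.mp hlastElem
      set d₀ : ℕ × Set X := (0, (∅ : Set X)) with hd₀
      set s : Finset ℕ := (Finset.range ch.length).filter
        (fun i => (G₂ ∩ A (ch.getD i d₀)).Nonempty) with hs
      have hsne : (ch.length - 1) ∈ s := by
        rw [hs, Finset.mem_filter]
        refine ⟨Finset.mem_range.mpr (by omega), ?_⟩
        rw [List.getD_eq_getElem ch d₀ hl1l, hcl1]
        exact ⟨q, hq, hA₂ eq' (hcl1 ▸ List.getElem_mem hl1l) hqe⟩
      have hs0 : 0 ∉ s := by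
        rw [hs, Finset.mem_filter]
        rintro ⟨-, hcontra⟩
        rw [List.getD_eq_getElem ch d₀ h0l, hc0] at hcontra
        have hepc : ep ∈ ch := hc0 ▸ List.getElem_mem h0l
        exact hk₂ m G₁ hG₁ G₂ hG₂ hdisj (A ep) (hA₁ ep hepc)
          ⟨⟨p, hp, hA₂ ep hepc hpe⟩, hcontra⟩
      have hsnem : s.Nonempty := ⟨ch.length - 1, hsne⟩
      set s₀ := s.min' hsnem with hs₀
      have hs₀mem : s₀ ∈ s := Finset.min'_mem _ _
      have hs₀le : s₀ ≤ ch.length - 1 := Finset.min'_le _ _ hsne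
      have hs₀pos : 0 < s₀ := by
        rcases Nat.eq_zero_or_pos s₀ with h | h
        · exact absurd (h ▸ hs₀mem) hs0
        · exact h
      have hs₀lt : s₀ < ch.length := by omega
      have hs₀1lt : s₀ - 1 < ch.length := by omega
      -- minimality at s₀ - 1
      have hminlt : ¬(G₂ ∩ A (ch[s₀ - 1]'hs₀1lt)).Nonempty := by
        intro hcon
        have hmem' : s₀ - 1 ∈ s := by
          rw [hs, Finset.mem_filter]
          exact ⟨Finset.mem_range.mpr (by omega), by
            rwa [List.getD_eq_getElem ch d₀ hs₀1lt]⟩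
        have := Finset.min'_le _ _ hmem'
        omega
      have hFpG₂ : (G₂ ∩ A (ch[s₀]'hs₀lt)).Nonempty := by
        have h2 := hs₀mem
        rw [hs, Finset.mem_filter] at h2
        obtain ⟨-, h2⟩ := h2
        rwa [List.getD_eq_getElem ch d₀ hs₀lt] at h2
      have hFm_mem : ch[s₀ - 1]'hs₀1lt ∈ ch := List.getElem_mem _
      have hFp_mem : ch[s₀]'hs₀lt ∈ ch := List.getElem_mem _
      have hFpG₁ : ¬(G₁ ∩ A (ch[s₀]'hs₀lt)).Nonempty := fun hcon =>
        hk₂ m G₁ hG₁ G₂ hG₂ hdisj (A (ch[s₀]'hs₀lt)) (hA₁ _ hFp_mem) ⟨hcon, hFpG₂⟩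
      -- crossing point
      have hchainIdx := List.isChain_iff_getElem.mp hchain (s₀ - 1) (by omega)
      have hgeteq : ch.get ⟨s₀ - 1 + 1, by omega⟩ = ch[s₀]'hs₀lt := by
        simp only [List.get_eq_getElem]
        congr 1
        omega
      simp only [List.get_eq_getElem] at hgeteq
      rw [hgeteq] at hchainIdx
      obtain ⟨x, hxm, hxp⟩ := hchainIdx
      have hxm' : x ∈ (ch[s₀ - 1]'hs₀1lt).2 := hxm
      -- descendants of G₁, G₂ at level m + k
      obtain ⟨C, hC, hpC, hCsub⟩ := exists_descendant CS k hG₁ hp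
      obtain ⟨D, hD, hqD, hDsub⟩ := exists_descendant CS k hG₂ hq
      have disjCA : Disjoint C (A (ch[s₀]'hs₀lt)) :=
        Set.disjoint_left.mpr fun a haC haA => hFpG₁ ⟨a, hCsub haC, haA⟩
      have disjAD : Disjoint (A (ch[s₀ - 1]'hs₀1lt)) D :=
        Set.disjoint_left.mpr fun a haA haD => hminlt ⟨a, hDsub haD, haA⟩
      -- subchains
      have hlen₁ : (ch.take s₀).length = s₀ := by rw [List.length_take]; omega
      have hlen₂ : (ch.drop s₀).length = ch.length - s₀ := List.length_drop
      have hchain₁ : IsCellChain CS p x (ch.take s₀) := by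
        refine ⟨List.ne_nil_of_length_pos (by omega), fun e he => hmem e (List.take_subset _ _ he),
          ⟨ep, ?_, hpe⟩, ⟨ch[s₀ - 1]'hs₀1lt, ?_, hxm'⟩, hchain.take s₀⟩
        · rw [List.head?_take, if_neg (by omega)]; exact hhead
        · rw [List.getLast?_eq_getElem?, hlen₁]
          rw [List.getElem?_take]
          rw [if_pos (by omega)]
          exact List.getElem?_eq_getElem hs₀1lt
      have hchain₂ : IsCellChain CS x q (ch.drop s₀) := by
        refine ⟨List.ne_nil_of_length_pos (by omega), fun e he => hmem e (List.drop_subset _ _ he),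
          ⟨ch[s₀]'hs₀lt, ?_, hxp⟩, ⟨eq', ?_, hqe⟩, hchain.drop s₀⟩
        · rw [List.head?_drop]
          exact List.getElem?_eq_getElem hs₀lt
        · rw [List.getLast?_drop, if_neg (by omega)]; exact hlast
      have hxAp : x ∈ A (ch[s₀]'hs₀lt) := hA₂ _ hFp_mem hxp
      have hxAm : x ∈ A (ch[s₀ - 1]'hs₀1lt) := hA₂ _ hFm_mem hxm'
      have ih₁ := ih (ch.take s₀) (by omega) (m + k) C (A (ch[s₀]'hs₀lt)) hC (hA₁ _ hFp_mem)
        disjCA p x hpC hxAp hchain₁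
      have ih₂ := ih (ch.drop s₀) (by omega) (m + k) (A (ch[s₀ - 1]'hs₀1lt)) D (hA₁ _ hFm_mem) hD
        disjAD x q hxAm hqD hchain₂
      have hsplit := chainWeight_split (α := α) ch s₀
      have hnn : (0:ℝ) ≤ α ^ (-((m + k : ℕ) : ℤ)) := zpow_nonneg hα0.le _
      linarith
lemma dAlpha_ge_of_disjoint (k : ℕ)
    (hk₂ : ∀ n : ℕ, ∀ E₁ ∈ CS.cells n, ∀ E₂ ∈ CS.cells n, Disjoint E₁ E₂ →
      ∀ F ∈ CS.cells (n + k), ¬((E₁ ∩ F).Nonempty ∧ (E₂ ∩ F).Nonempty))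
    (hα₁ : 1 < α) (hαk : α ^ k ≤ 3 / 2)
    {m : ℕ} {G₁ G₂ : Set X} (hG₁ : G₁ ∈ CS.cells m) (hG₂ : G₂ ∈ CS.cells m)
    (hdisj : Disjoint G₁ G₂) {p q : X} (hp : p ∈ G₁) (hq : q ∈ G₂) :
    2 / 3 * α ^ (-(m : ℤ)) ≤ dAlpha CS α p q :=
  dAlpha_ge CS (lt_trans one_pos hα₁) fun c hc =>
    chain_lb CS k hk₂ hα₁ hαk c.length c le_rfl m G₁ G₂ hG₁ hG₂ hdisj p q hp hq hc

lemma dAlpha_ge_of_noPairAt (k : ℕ)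
    (hk₂ : ∀ n : ℕ, ∀ E₁ ∈ CS.cells n, ∀ E₂ ∈ CS.cells n, Disjoint E₁ E₂ →
      ∀ F ∈ CS.cells (n + k), ¬((E₁ ∩ F).Nonempty ∧ (E₂ ∩ F).Nonempty))
    (hα₁ : 1 < α) (hαk : α ^ k ≤ 3 / 2)
    {m : ℕ} {p q : X} (h : NoPairAt CS p q m) :
    2 / 3 * α ^ (-(m : ℤ)) ≤ dAlpha CS α p q := by
  have hα0 : (0:ℝ) < α := lt_trans one_pos hα₁
  apply dAlpha_ge CS hα0
  intro c hc
  by_cases hcase : ∃ e ∈ c, e.1 ≤ m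
  · obtain ⟨e, hec, helev⟩ := hcase
    have h1 : α ^ (-(m:ℤ)) ≤ α ^ (-(e.1:ℤ)) := by
      apply zpow_le_zpow_right₀ hα₁.le
      have : (e.1 : ℤ) ≤ (m : ℤ) := by exact_mod_cast helev
      omega
    have h2 := le_chainWeight hα0 hec
    nlinarith [zpow_nonneg hα0.le (-(m:ℤ))]
  · push_neg at hcase
    obtain ⟨hne, hmem, ⟨ep, hhead, hpe⟩, ⟨eq', hlast, hqe⟩, -⟩ := id hc
    have hepc : ep ∈ c := List.mem_of_mem_head? (by rw [hhead]; rfl)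
    have heqc : eq' ∈ c := List.mem_of_mem_getLast? (by rw [hlast]; rfl)
    obtain ⟨B₁, hB₁, hsub₁⟩ := exists_ancestor CS ep.1 (le_of_lt (hcase ep hepc)) (hmem ep hepc)
    obtain ⟨B₂, hB₂, hsub₂⟩ := exists_ancestor CS eq'.1 (le_of_lt (hcase eq' heqc)) (hmem eq' heqc)
    have hp₁ : p ∈ B₁ := hsub₁ hpe
    have hq₂ : q ∈ B₂ := hsub₂ hqe
    have hdisj : Disjoint B₁ B₂ := Set.disjoint_iff_inter_eq_empty.mpr
      (Set.not_nonempty_iff_eq_empty.mp (h B₁ hB₁ B₂ hB₂ hp₁ hq₂))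
    exact chain_lb CS k hk₂ hα₁ hαk c.length c le_rfl m B₁ B₂ hB₁ hB₂ hdisj p q hp₁ hq₂ hc

end Stmt7Aux

section Koenig

def ancAux {β : Type*} (g : ℕ → β → β) (m : ℕ) : ℕ → β → β
  | 0, u => u
  | j + 1, u => ancAux g m j (g (m + j) u)

lemma ancAux_comp {β : Type*} (g : ℕ → β → β) (m : ℕ) :
    ∀ (i j : ℕ) (u : β), ancAux g m j (ancAux g (m + j) i u) = ancAux g m (j + i) u := by
  intro i
  induction i with
  | zero => intro j u; rfl
  | succ i ih =>
    intro j u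
    show ancAux g m j (ancAux g (m + j) i (g (m + j + i) u)) = ancAux g m (j + (i + 1)) u
    rw [ih j (g (m + j + i) u)]
    show ancAux g m (j + i) (g (m + j + i) u) = ancAux g m (j + i) (g (m + (j + i)) u)
    rw [Nat.add_assoc]

lemma koenig {β : Type*} (P : ℕ → Set β) (hfin : ∀ n, (P n).Finite)
    (hne : ∀ n, (P n).Nonempty) (R : β → β → Prop)
    (hpar : ∀ n, ∀ u ∈ P (n + 1), ∃ v ∈ P n, R u v) :
    ∃ f : ℕ → β, (∀ n, f n ∈ P n) ∧ ∀ n, R (f (n + 1)) (f n) := by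
  classical
  have hpar' : ∀ (n : ℕ) (u : β), ∃ v, u ∈ P (n + 1) → (v ∈ P n ∧ R u v) := by
    intro n u
    by_cases h : u ∈ P (n + 1)
    · obtain ⟨v, hv, hr⟩ := hpar n u h
      exact ⟨v, fun _ => ⟨hv, hr⟩⟩
    · exact ⟨(hne 0).choose, fun h' => absurd h' h⟩
  choose g hg using hpar'
  have ancMem : ∀ (m j : ℕ) (u : β), u ∈ P (m + j) → ancAux g m j u ∈ P m := by
    intro m j
    induction j with
    | zero => intro u hu; exact hu
    | succ j ih =>
      intro u hu
      exact ih _ (hg (m + j) u hu).1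
  have pigeon : ∀ (m : ℕ) (w : ℕ → β), (∀ j, w j ∈ P m) →
      ∃ u ∈ P m, ∀ j, ∃ j', j ≤ j' ∧ w j' = u := by
    intro m w hw
    by_contra hcon
    push_neg at hcon
    have hbig : (Set.univ : Set ℕ) ⊆ ⋃ u ∈ P m, {j | w j = u} := fun j _ =>
      Set.mem_biUnion (hw j) rfl
    have hfinU : (⋃ u ∈ P m, {j : ℕ | w j = u}).Finite := by
      apply Set.Finite.biUnion (hfin m)
      intro u hu
      obtain ⟨j₀, hj₀⟩ := hcon u hu
      apply Set.Finite.subset (Set.finite_Iio j₀)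
      intro j hj
      by_contra hlt
      exact hj₀ j (by simpa using hlt) hj
    exact Set.infinite_univ (hfinU.subset hbig)
  have goodEx : ∀ m, ∃ u, u ∈ P m ∧ ∀ j, ∃ v ∈ P (m + j), ancAux g m j v = u := by
    intro m
    have hw : ∀ j, ancAux g m j (hne (m + j)).choose ∈ P m :=
      fun j => ancMem m j _ (hne (m + j)).choose_spec
    obtain ⟨u, hu, hinf⟩ := pigeon m _ hw
    refine ⟨u, hu, ?_⟩
    intro j
    obtain ⟨j', hjj', hj'⟩ := hinf j
    refine ⟨ancAux g (m + j) (j' - j) (hne (m + j')).choose, ?_, ?_⟩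
    · apply ancMem
      rw [show (m + j) + (j' - j) = m + j' from by omega]
      exact (hne (m + j')).choose_spec
    · rw [ancAux_comp g m (j' - j) j, show j + (j' - j) = j' from by omega]
      exact hj'
  have goodSucc : ∀ m u, (u ∈ P m ∧ ∀ j, ∃ v ∈ P (m + j), ancAux g m j v = u) →
      ∃ u', (u' ∈ P (m + 1) ∧ ∀ j, ∃ v ∈ P ((m + 1) + j), ancAux g (m + 1) j v = u') ∧
        g m u' = u := by
    intro m u hu
    obtain ⟨hum, hall⟩ := hu
    have hv : ∀ j, ∃ v ∈ P (m + (j + 1)), ancAux g m (j + 1) v = u := fun j => hall (j + 1)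
    choose v hv₁ hv₂ using hv
    have hw : ∀ j, ancAux g (m + 1) j (v j) ∈ P (m + 1) := by
      intro j
      apply ancMem
      rw [show (m + 1) + j = m + (j + 1) from by omega]
      exact hv₁ j
    have hgu : ∀ j, g m (ancAux g (m + 1) j (v j)) = u := by
      intro j
      have h1 : ancAux g m 1 (ancAux g (m + 1) j (v j)) = ancAux g m (1 + j) (v j) :=
        ancAux_comp g m j 1 (v j)
      have h2 : ancAux g m 1 (ancAux g (m + 1) j (v j)) = g m (ancAux g (m + 1) j (v j)) := rfl
      rw [← h2, h1, show 1 + j = j + 1 from by omega]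
      exact hv₂ j
    obtain ⟨u', hu', hinf⟩ := pigeon (m + 1) _ hw
    refine ⟨u', ⟨hu', ?_⟩, ?_⟩
    · intro j
      obtain ⟨j', hjj', hj'⟩ := hinf j
      refine ⟨ancAux g ((m + 1) + j) (j' - j) (v j'), ?_, ?_⟩
      · apply ancMem
        rw [show ((m + 1) + j) + (j' - j) = m + (j' + 1) from by omega]
        exact hv₁ j'
      · rw [ancAux_comp g (m + 1) (j' - j) j, show j + (j' - j) = j' from by omega]
        exact hj'
    · obtain ⟨j', -, hj'⟩ := hinf 0
      rw [← hj']
      exact hgu j'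
  let f : (n : ℕ) → {u : β // u ∈ P n ∧ ∀ j, ∃ v ∈ P (n + j), ancAux g n j v = u} := fun n =>
    Nat.rec ⟨(goodEx 0).choose, (goodEx 0).choose_spec⟩
      (fun n prev => ⟨(goodSucc n prev.1 prev.2).choose,
        ((goodSucc n prev.1 prev.2).choose_spec).1⟩) n
  refine ⟨fun n => (f n).1, fun n => (f n).2.1, fun n => ?_⟩
  have hgn : g n ((f (n + 1)).1) = (f n).1 :=
    ((goodSucc n (f n).1 (f n).2).choose_spec).2
  have hres := (hg n ((f (n + 1)).1) ((f (n + 1)).2.1)).2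
  rw [hgn] at hres
  exact hres

end Koenig

section Stmt7Aux2

set_option linter.unusedSectionVars false
set_option linter.unusedVariables false

variable {X : Type*} [TopologicalSpace X] (CS : CellStructure X)

lemma exists_noPairAt [CompactSpace X] [T2Space X] {p q : X} (hpq : p ≠ q) :
    ∃ m, NoPairAt CS p q m := by
  by_contra hcon
  push_neg at hcon
  have hpair : ∀ m, ∃ u : Set X × Set X, u.1 ∈ CS.cells m ∧ u.2 ∈ CS.cells m ∧
      p ∈ u.1 ∧ q ∈ u.2 ∧ (u.1 ∩ u.2).Nonempty := by
    intro m
    have h := hcon m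
    unfold NoPairAt at h
    push_neg at h
    obtain ⟨Ex, hEx, Ey, hEy, hpEx, hqEy, hne⟩ := h
    exact ⟨(Ex, Ey), hEx, hEy, hpEx, hqEy, hne⟩
  obtain ⟨f, hf, hR⟩ := koenig
    (fun m => {u : Set X × Set X | u.1 ∈ CS.cells m ∧ u.2 ∈ CS.cells m ∧
      p ∈ u.1 ∧ q ∈ u.2 ∧ (u.1 ∩ u.2).Nonempty})
    (fun m => ((CS.finite_cells m).prod (CS.finite_cells m)).subset
      (fun u hu => Set.mem_prod.mpr ⟨hu.1, hu.2.1⟩))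
    (fun m => hpair m)
    (fun u v => u.1 ⊆ v.1 ∧ u.2 ⊆ v.2)
    (by
      intro n u hu
      obtain ⟨h1, h2, hp1, hq2, hne⟩ := hu
      obtain ⟨A₁, hA₁, hs₁⟩ := CS.exists_parent n u.1 h1
      obtain ⟨A₂, hA₂, hs₂⟩ := CS.exists_parent n u.2 h2
      exact ⟨(A₁, A₂), ⟨hA₁, hA₂, hs₁ hp1, hs₂ hq2,
        hne.mono (Set.inter_subset_inter hs₁ hs₂)⟩, hs₁, hs₂⟩)
  obtain ⟨a, ha⟩ := CS.descending_singleton (fun n => (f n).1) (fun n => (hf n).1)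
    (fun n => (hR n).1)
  obtain ⟨b, hb⟩ := CS.descending_singleton (fun n => (f n).2) (fun n => (hf n).2.1)
    (fun n => (hR n).2)
  have hpa : p ∈ ({a} : Set X) := by
    rw [← ha]
    exact Set.mem_iInter.mpr fun n => (hf n).2.2.1
  have hqb : q ∈ ({b} : Set X) := by
    rw [← hb]
    exact Set.mem_iInter.mpr fun n => (hf n).2.2.2.1
  have hclosed : ∀ n, IsClosed ((f n).1 ∩ (f n).2) := fun n =>
    ((CS.isCompact_cells n _ (hf n).1).isClosed).inter
      ((CS.isCompact_cells n _ (hf n).2.1).isClosed)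
  have hKne : (⋂ n, (f n).1 ∩ (f n).2).Nonempty := by
    apply IsCompact.nonempty_iInter_of_sequence_nonempty_isCompact_isClosed
    · intro i
      exact Set.inter_subset_inter (hR i).1 (hR i).2
    · intro i
      exact (hf i).2.2.2.2
    · exact (hclosed 0).isCompact
    · exact hclosed
  obtain ⟨z, hz⟩ := hKne
  have hz1 : z ∈ ({a} : Set X) := by
    rw [← ha]
    exact Set.mem_iInter.mpr fun n => (Set.mem_iInter.mp hz n).1
  have hz2 : z ∈ ({b} : Set X) := by
    rw [← hb]
    exact Set.mem_iInter.mpr fun n => (Set.mem_iInter.mp hz n).2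
  apply hpq
  rw [Set.mem_singleton_iff] at hpa hqb hz1 hz2
  rw [hpa, hqb, ← hz1, ← hz2]

end Stmt7Aux2
section Stmt7Final

set_option linter.unusedSectionVars false
set_option linter.unusedVariables false

variable {X : Type*} [TopologicalSpace X] (CS : CellStructure X) {α : ℝ}

lemma sdiam_le_cell (hα₁ : 1 < α) {n : ℕ} {E : Set X} (hE : E ∈ CS.cells n) :
    sdiam (dAlpha CS α) E ≤ α ^ (-(n : ℤ)) := by
  have hα0 : (0:ℝ) < α := lt_trans one_pos hα₁
  apply Real.sSup_le
  · rintro v ⟨x, hx, y, hy, rfl⟩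
    exact dAlpha_le_single CS hα0 hE hx hy
  · exact zpow_nonneg hα0.le _

lemma sdiam_ge_cell (k : ℕ)
    (hk₁ : ∀ n : ℕ, ∀ E ∈ CS.cells n, ∃ E₁ ∈ CS.cells (n + k), ∃ E₂ ∈ CS.cells (n + k),
      E₁ ⊆ E ∧ E₂ ⊆ E ∧ E₁ ≠ E₂ ∧ Disjoint E₁ E₂)
    (hk₂ : ∀ n : ℕ, ∀ E₁ ∈ CS.cells n, ∀ E₂ ∈ CS.cells n, Disjoint E₁ E₂ →
      ∀ F ∈ CS.cells (n + k), ¬((E₁ ∩ F).Nonempty ∧ (E₂ ∩ F).Nonempty))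
    (hα₁ : 1 < α) (hαk : α ^ k ≤ 3 / 2) {n : ℕ} {E : Set X} (hE : E ∈ CS.cells n) :
    2 / 3 * α ^ (-((n + k : ℕ) : ℤ)) ≤ sdiam (dAlpha CS α) E := by
  have hα0 : (0:ℝ) < α := lt_trans one_pos hα₁
  obtain ⟨E₁, hE₁, E₂, hE₂, hsub₁, hsub₂, hne, hdisj⟩ := hk₁ n E hE
  obtain ⟨x, hx⟩ := cell_nonempty CS hE₁
  obtain ⟨y, hy⟩ := cell_nonempty CS hE₂
  have hd : 2 / 3 * α ^ (-((n + k : ℕ) : ℤ)) ≤ dAlpha CS α x y :=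
    dAlpha_ge_of_disjoint CS k hk₂ hα₁ hαk hE₁ hE₂ hdisj hx hy
  refine hd.trans (le_csSup ?_ ?_)
  · exact ⟨1, by rintro v ⟨a, ha, b, hb, rfl⟩; exact dAlpha_le_one CS hα0 a b⟩
  · exact ⟨x, hsub₁ hx, y, hsub₂ hy, rfl⟩

end Stmt7Final

/-- If every `n`-cell contains two disjoint `(n+k)`-cells, no two
disjoint `n`-cells meet a common `(n+k)`-cell, and `1 < α ≤ (3/2)^{1/k}`, then `d_α`
is an undistorted metric on `X`. -/
theorem stmt7 {X : Type*} [TopologicalSpace X] [CompactSpace X] [ConnectedSpace X]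
    [TopologicalSpace.MetrizableSpace X] (CS : CellStructure X) (k : ℕ)
    (hk₁ : ∀ n : ℕ, ∀ E ∈ CS.cells n, ∃ E₁ ∈ CS.cells (n + k), ∃ E₂ ∈ CS.cells (n + k),
      E₁ ⊆ E ∧ E₂ ⊆ E ∧ E₁ ≠ E₂ ∧ Disjoint E₁ E₂)
    (hk₂ : ∀ n : ℕ, ∀ E₁ ∈ CS.cells n, ∀ E₂ ∈ CS.cells n, Disjoint E₁ E₂ →
      ∀ F ∈ CS.cells (n + k), ¬((E₁ ∩ F).Nonempty ∧ (E₂ ∩ F).Nonempty))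
    (α : ℝ) (hα₁ : 1 < α) (hα₂ : α ≤ (3 / 2 : ℝ) ^ ((k : ℝ))⁻¹) :
    IsMetricOn (dAlpha CS α) ∧ IsUndistorted CS.cells (dAlpha CS α) := by
  have hα0 : (0:ℝ) < α := lt_trans one_pos hα₁
  have hk0 : k ≠ 0 := by
    rintro rfl
    rw [Nat.cast_zero, inv_zero, Real.rpow_zero] at hα₂
    linarith
  have hαk : α ^ k ≤ 3 / 2 := by
    have h32 : (0:ℝ) ≤ 3 / 2 := by norm_num
    calc α ^ k ≤ ((3 / 2 : ℝ) ^ ((k : ℝ))⁻¹) ^ k := pow_le_pow_left₀ hα0.le hα₂ k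
      _ = (3 / 2 : ℝ) := by
          rw [← Real.rpow_natCast ((3 / 2 : ℝ) ^ ((k : ℝ))⁻¹) k, ← Real.rpow_mul h32,
            inv_mul_cancel₀ (by exact_mod_cast hk0 : (k : ℝ) ≠ 0), Real.rpow_one]
  have hzp : ∀ n : ℕ, α ^ (-(n : ℤ)) = (α⁻¹) ^ n := fun n => by
    rw [zpow_neg, zpow_natCast, inv_pow]
  constructor
  · refine ⟨fun x y => dAlpha_nonneg CS hα0 x y, fun x y => ?_,
      fun x y => dAlpha_symm CS hα0 x y, fun x y z => dAlpha_triangle CS hα0 x y z⟩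
    constructor
    · intro h0
      by_contra hxy
      obtain ⟨m, hm⟩ := exists_noPairAt CS hxy
      have hge := dAlpha_ge_of_noPairAt CS k hk₂ hα₁ hαk hm
      rw [h0] at hge
      nlinarith [zpow_pos hα0 (-(m:ℤ))]
    · rintro rfl
      refine le_antisymm ?_ (dAlpha_nonneg CS hα0 x x)
      have hle : ∀ n : ℕ, dAlpha CS α x x ≤ (α⁻¹) ^ n := by
        intro n
        obtain ⟨E, hE, hxE⟩ := exists_cell_mem CS x n
        rw [← hzp n]
        exact dAlpha_le_single CS hα0 hE hxE hxE
      have htend : Filter.Tendsto (fun n : ℕ => (α⁻¹) ^ n) Filter.atTop (nhds 0) :=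
        tendsto_pow_atTop_nhds_zero_of_lt_one (by positivity) (inv_lt_one_of_one_lt₀ hα₁)
      exact ge_of_tendsto' htend hle
  · refine ⟨α⁻¹, α⁻¹, 9/4, 2/3, inv_pos.mpr hα0, le_rfl, inv_lt_one_of_one_lt₀ hα₁,
      by norm_num, by norm_num, ?_, ?_⟩
    · intro m n hmn E hE E' hE' _
      have hupper' : sdiam (dAlpha CS α) E' ≤ α ^ (-(n:ℤ)) := sdiam_le_cell CS hα₁ hE'
      have hupper : sdiam (dAlpha CS α) E ≤ α ^ (-(m:ℤ)) := sdiam_le_cell CS hα₁ hE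
      have hlowkey : ∀ (j : ℕ) (F : Set X), F ∈ CS.cells j →
          4/9 * α ^ (-(j:ℤ)) ≤ sdiam (dAlpha CS α) F := by
        intro j F hF
        have h1 := sdiam_ge_cell CS k hk₁ hk₂ hα₁ hαk hF
        have hsplit : α ^ (-(((j + k : ℕ)) : ℤ)) = α ^ (-(j:ℤ)) * α ^ (-(k:ℤ)) := by
          rw [← zpow_add₀ (ne_of_gt hα0)]
          congr 1
          push_cast
          ring
        have hkinv : (2/3 : ℝ) ≤ α ^ (-(k : ℤ)) := by
          rw [zpow_neg, zpow_natCast]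
          calc (2/3 : ℝ) = (3/2 : ℝ)⁻¹ := by norm_num
            _ ≤ (α ^ k)⁻¹ := inv_anti₀ (pow_pos hα0 k) hαk
        have hjnn : (0:ℝ) ≤ α ^ (-(j:ℤ)) := zpow_nonneg hα0.le _
        rw [hsplit] at h1
        nlinarith
      have hlow := hlowkey m E hE
      have hlow' := hlowkey n E' hE'
      have hEpos : 0 < sdiam (dAlpha CS α) E :=
        lt_of_lt_of_le (by positivity) hlow
      have hcast : ((n - m : ℕ) : ℤ) = (n : ℤ) - (m : ℤ) := by
        rw [Nat.cast_sub hmn]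
      have hpow : ((α:ℝ)⁻¹) ^ (n - m) * α ^ (-(m:ℤ)) = α ^ (-(n:ℤ)) := by
        rw [← hzp (n - m), ← zpow_add₀ (ne_of_gt hα0), hcast]
        congr 1
        ring
      have ht : (0:ℝ) ≤ ((α:ℝ)⁻¹) ^ (n - m) := by positivity
      have ha : (0:ℝ) < α ^ (-(m:ℤ)) := zpow_pos hα0 _
      have hu1 : sdiam (dAlpha CS α) E' ≤ ((α:ℝ)⁻¹) ^ (n - m) * α ^ (-(m:ℤ)) := by
        rw [hpow]; exact hupper'
      have hu2 : 4/9 * (((α:ℝ)⁻¹) ^ (n - m) * α ^ (-(m:ℤ))) ≤ sdiam (dAlpha CS α) E' := by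
        rw [hpow]
        exact hlow'
      constructor
      · rw [div_le_div_iff₀ (by norm_num) hEpos]
        have hm1 : ((α:ℝ)⁻¹) ^ (n - m) * sdiam (dAlpha CS α) E ≤
            ((α:ℝ)⁻¹) ^ (n - m) * α ^ (-(m:ℤ)) := mul_le_mul_of_nonneg_left hupper ht
        linarith
      · rw [div_le_iff₀ hEpos]
        have hm2 : ((α:ℝ)⁻¹) ^ (n - m) * α ^ (-(m:ℤ)) ≤
            ((α:ℝ)⁻¹) ^ (n - m) * (9/4 * sdiam (dAlpha CS α) E) :=
          mul_le_mul_of_nonneg_left (by linarith) ht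
        linarith
    · intro n E₁ hE₁ E₂ hE₂ hdisj
      have h1 : sdiam (dAlpha CS α) E₁ ≤ α ^ (-(n:ℤ)) := sdiam_le_cell CS hα₁ hE₁
      have h2 : 2/3 * α ^ (-(n:ℤ)) ≤ sdist (dAlpha CS α) E₁ E₂ := by
        apply le_csInf
        · obtain ⟨x, hx⟩ := cell_nonempty CS hE₁
          obtain ⟨y, hy⟩ := cell_nonempty CS hE₂
          exact ⟨_, x, hx, y, hy, rfl⟩
        · rintro v ⟨x, hx, y, hy, rfl⟩
          exact dAlpha_ge_of_disjoint CS k hk₂ hα₁ hαk hE₁ hE₂ hdisj hx hy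
      linarith
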